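/- Fix q > 0 with q ≠ 1 and let f(t) = (t²(1+q²) + 2t(1+q)(1+q³) + (1−q)²(1+q⁴))/(t + q² + 1)² for t ≥ 0. Then f attains its maximum on [0,∞) at t_max = (3q⁴ + 2q² + 3)/(1−q)², and f(t_max) > 1 + q². -/

import Mathlib

theorem stmt_8 (q : ℝ) (hq : 0 < q) (hq1 : q ≠ 1)
    (f : ℝ → ℝ)
    (hf : ∀ t, f t = (t ^ 2 * (1 + q ^ 2) + 2 * t * (1 + q) * (1 + q ^ 3) +
      (1 - q) ^ 2 * (1 + q ^ 4)) / (t + q ^ 2 + 1) ^ 2)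
    (tmax : ℝ) (htmax : tmax = (3 * q ^ 4 + 2 * q ^ 2 + 3) / (1 - q) ^ 2) :
    (∀ t, 0 ≤ t → f t ≤ f tmax) ∧ f tmax > 1 + q ^ 2 := by
  have h1 : (1 : ℝ) - q ≠ 0 := sub_ne_zero.mpr (Ne.symm hq1)
  have h1sq : (0:ℝ) < (1 - q) ^ 2 := by positivity
  have hP : (0:ℝ) < 2 - q + 2*q^2 - q^3 + 2*q^4 := by
    nlinarith [sq_nonneg (1 - q), sq_nonneg (q - q^2), sq_nonneg q, sq_nonneg (q^2), hq]
  have hfm : f tmax = 1 + q^2 + q * (1 - q)^4 / (2 * (2 - q + 2*q^2 - q^3 + 2*q^4)) := by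
    rw [hf, htmax]
    have hd : (3 * q ^ 4 + 2 * q ^ 2 + 3) / (1 - q) ^ 2 + q ^ 2 + 1 ≠ 0 := by
      have : (0:ℝ) < (3 * q ^ 4 + 2 * q ^ 2 + 3) / (1 - q) ^ 2 := by positivity
      positivity
    have hPne : (2 - q + 2*q^2 - q^3 + 2*q^4) ≠ 0 := hP.ne'
    have hPne' : (2 - q + q^2*2 - q^3 + q^4*2) ≠ 0 := by linarith
    field_simp
    ring
  constructor
  · intro t ht
    rw [hf, hfm]
    have hden : (0:ℝ) < (t + q ^ 2 + 1) ^ 2 := by positivity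
    rw [div_le_iff₀ hden]
    have key := sq_nonneg (2*q*(1-q)^2*(t + q^2 + 1) - 4*q*(2 - q + 2*q^2 - q^3 + 2*q^4))
    have hP' := hP
    have hM : 1 + q^2 + q * (1 - q)^4 / (2 * (2 - q + 2*q^2 - q^3 + 2*q^4)) =
        ((1 + q^2) * (2 * (2 - q + 2*q^2 - q^3 + 2*q^4)) + q * (1 - q)^4) /
          (2 * (2 - q + 2*q^2 - q^3 + 2*q^4)) := by
      rw [eq_div_iff (by positivity), add_mul, div_mul_cancel₀ _ (by positivity)]
    rw [hM, div_mul_eq_mul_div, le_div_iff₀ (by positivity)]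
    nlinarith [key, hP, hq, sq_nonneg (t + q^2 + 1)]
  · rw [hfm]
    have : (0:ℝ) < q * (1 - q)^4 / (2 * (2 - q + 2*q^2 - q^3 + 2*q^4)) := by positivity
    linarith
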